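/- arXiv:2404.07886 — 2 statements merged into one kernel-verified Lean document; each statement's English description precedes it below -/
import Mathlib

section
/- (Orthogonal Procrustes) Let B ∈ ℝ^{n×n} have singular value decomposition B = UΣVᵀ with U, V orthogonal. Then D* = UVᵀ maximizes D ↦ trace(DᵀB) over all orthogonal n×n matrices D; equivalently, D* minimizes D ↦ ‖DC - Y‖_F² + λ‖D - D₀‖_F² over orthogonal D, where B = YCᵀ + λD₀. -/
open Matrix

lemma sumsq_eq_trace {n m : ℕ} (M : Matrix (Fin n) (Fin m) ℝ) :
    (∑ i, ∑ j, (M i j)^2) = Matrix.trace (Mᵀ * M) := by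
  simp only [Matrix.trace, Matrix.diag, Matrix.mul_apply, Matrix.transpose_apply, sq]
  rw [Finset.sum_comm]

lemma trace_le_sum {n : ℕ} (U V : Matrix (Fin n) (Fin n) ℝ)
    (hU : Uᵀ * U = 1) (hV : Vᵀ * V = 1)
    (σ : Fin n → ℝ) (hσ : ∀ i, 0 ≤ σ i)
    (D : Matrix (Fin n) (Fin n) ℝ) (hD : Dᵀ * D = 1) :
    Matrix.trace (Dᵀ * (U * Matrix.diagonal σ * Vᵀ)) ≤ ∑ i, σ i := by
  have hU' : U * Uᵀ = 1 := mul_eq_one_comm.mp hU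
  set W := Uᵀ * D * V with hW
  have hWW : Wᵀ * W = 1 := by
    have : Wᵀ * W = Vᵀ * (Dᵀ * ((U * Uᵀ) * (D * V))) := by
      simp [hW, Matrix.transpose_mul, Matrix.mul_assoc]
    rw [this, hU', Matrix.one_mul, ← Matrix.mul_assoc Dᵀ, hD, Matrix.one_mul, hV]
  have hdiag : ∀ i, W i i ≤ 1 := by
    intro i
    have h1 : (Wᵀ * W) i i = ∑ k, W k i * W k i := by
      simp [Matrix.mul_apply, Matrix.transpose_apply]
    have h2 : (Wᵀ * W) i i = 1 := by rw [hWW, Matrix.one_apply_eq]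
    have h3 : ∑ k, W k i * W k i = 1 := by rw [← h1, h2]
    have h4 : W i i * W i i ≤ ∑ k, W k i * W k i :=
      Finset.single_le_sum (fun k _ => mul_self_nonneg (W k i)) (Finset.mem_univ i)
    nlinarith [h4, h3]
  have htr : Matrix.trace (Dᵀ * (U * Matrix.diagonal σ * Vᵀ)) =
      ∑ i, W i i * σ i := by
    rw [show Dᵀ * (U * Matrix.diagonal σ * Vᵀ) = (Dᵀ * U * Matrix.diagonal σ) * Vᵀ by
      simp [Matrix.mul_assoc]]
    rw [Matrix.trace_mul_comm]
    rw [show Vᵀ * (Dᵀ * U * Matrix.diagonal σ) = (Vᵀ * Dᵀ * U) * Matrix.diagonal σ by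
      simp [Matrix.mul_assoc]]
    have : ∀ i, ((Vᵀ * Dᵀ * U) * Matrix.diagonal σ) i i = W i i * σ i := by
      intro i
      rw [Matrix.mul_diagonal]
      congr 1
      simp only [hW, Matrix.mul_apply, Matrix.transpose_apply, Finset.sum_mul]
      rw [Finset.sum_comm]
      exact Finset.sum_congr rfl fun k _ => Finset.sum_congr rfl fun l _ => by ring
    simp only [Matrix.trace, Matrix.diag]
    exact Finset.sum_congr rfl fun i _ => this i
  rw [htr]
  exact Finset.sum_le_sum fun i _ => by nlinarith [hdiag i, hσ i]

lemma trace_opt {n : ℕ} (U V : Matrix (Fin n) (Fin n) ℝ)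
    (hU : Uᵀ * U = 1) (hV : Vᵀ * V = 1)
    (σ : Fin n → ℝ) :
    Matrix.trace ((U * Vᵀ)ᵀ * (U * Matrix.diagonal σ * Vᵀ)) = ∑ i, σ i := by
  have hV' : V * Vᵀ = 1 := mul_eq_one_comm.mp hV
  have : (U * Vᵀ)ᵀ * (U * Matrix.diagonal σ * Vᵀ) =
      V * ((Uᵀ * U) * Matrix.diagonal σ) * Vᵀ := by
    simp [Matrix.transpose_mul, Matrix.mul_assoc]
  rw [this, hU, Matrix.one_mul, Matrix.trace_mul_comm, ← Matrix.mul_assoc, hV,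
    Matrix.one_mul, Matrix.trace_diagonal]

lemma cost_eq {n m : ℕ} (lam : ℝ)
    (C Y : Matrix (Fin n) (Fin m) ℝ) (D₀ B : Matrix (Fin n) (Fin n) ℝ)
    (hBdecomp : B = Y * Cᵀ + lam • D₀)
    (D : Matrix (Fin n) (Fin n) ℝ) (hD : Dᵀ * D = 1) :
    (∑ i, ∑ j, ((D * C - Y) i j)^2) + lam * ∑ i, ∑ j, ((D - D₀) i j)^2 =
    Matrix.trace (Cᵀ * C) + Matrix.trace (Yᵀ * Y) + lam * n +
      lam * Matrix.trace (D₀ᵀ * D₀) - 2 * Matrix.trace (Dᵀ * B) := by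
  rw [sumsq_eq_trace, sumsq_eq_trace, hBdecomp]
  have hDC : (D * C)ᵀ * (D * C) = Cᵀ * C := by
    rw [Matrix.transpose_mul, Matrix.mul_assoc, ← Matrix.mul_assoc Dᵀ, hD,
      Matrix.one_mul]
  have h2 : Matrix.trace (Yᵀ * (D * C)) = Matrix.trace (Dᵀ * (Y * Cᵀ)) := by
    rw [← Matrix.trace_transpose (Dᵀ * (Y * Cᵀ))]
    simp only [Matrix.transpose_mul, Matrix.transpose_transpose]
    rw [Matrix.trace_mul_comm Yᵀ (D * C), Matrix.mul_assoc, Matrix.trace_mul_comm D (C * Yᵀ)]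
  have h1 : Matrix.trace ((D * C)ᵀ * Y) = Matrix.trace (Dᵀ * (Y * Cᵀ)) := by
    rw [← Matrix.trace_transpose ((D * C)ᵀ * Y)]
    simp only [Matrix.transpose_mul, Matrix.transpose_transpose]
    exact h2
  have h3 : Matrix.trace (D₀ᵀ * D) = Matrix.trace (Dᵀ * D₀) := by
    rw [← Matrix.trace_transpose (D₀ᵀ * D)]
    simp only [Matrix.transpose_mul, Matrix.transpose_transpose]
  have htrDD : Matrix.trace (Dᵀ * D) = (n : ℝ) := by
    rw [hD]; simp
  simp only [Matrix.transpose_sub, Matrix.sub_mul, Matrix.mul_sub, Matrix.trace_sub,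
    Matrix.mul_add, Matrix.trace_add, Matrix.mul_smul, Matrix.trace_smul, smul_eq_mul]
  rw [hDC, h1, h2, h3, htrDD]
  ring

/-- Orthogonal Procrustes: if `B = UΣVᵀ` with `U, V` orthogonal and `Σ` diagonal with
nonnegative entries, then `D* = UVᵀ` maximizes `D ↦ trace(DᵀB)` over orthogonal `D`;
equivalently, it minimizes `D ↦ ‖DC - Y‖_F² + λ‖D - D₀‖_F²` where `B = YCᵀ + λD₀`. -/
theorem orthogonal_procrustes {n m : ℕ}
    (U V : Matrix (Fin n) (Fin n) ℝ)
    (hU : Uᵀ * U = 1) (hV : Vᵀ * V = 1)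
    (σ : Fin n → ℝ) (hσ : ∀ i, 0 ≤ σ i)
    (B : Matrix (Fin n) (Fin n) ℝ) (hB : B = U * Matrix.diagonal σ * Vᵀ)
    (lam : ℝ) (hlam : 0 ≤ lam)
    (C Y : Matrix (Fin n) (Fin m) ℝ) (D₀ : Matrix (Fin n) (Fin n) ℝ)
    (hBdecomp : B = Y * Cᵀ + lam • D₀) :
    (∀ D : Matrix (Fin n) (Fin n) ℝ, Dᵀ * D = 1 →
      Matrix.trace (Dᵀ * B) ≤ Matrix.trace ((U * Vᵀ)ᵀ * B)) ∧
    (∀ D : Matrix (Fin n) (Fin n) ℝ, Dᵀ * D = 1 →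
      (∑ i, ∑ j, ((U * Vᵀ * C - Y) i j)^2) + lam * ∑ i, ∑ j, ((U * Vᵀ - D₀) i j)^2 ≤
      (∑ i, ∑ j, ((D * C - Y) i j)^2) + lam * ∑ i, ∑ j, ((D - D₀) i j)^2) := by
  have hmax : ∀ D : Matrix (Fin n) (Fin n) ℝ, Dᵀ * D = 1 →
      Matrix.trace (Dᵀ * B) ≤ Matrix.trace ((U * Vᵀ)ᵀ * B) := by
    intro D hD
    rw [hB, trace_opt U V hU hV σ]
    exact trace_le_sum U V hU hV σ hσ D hD
  refine ⟨hmax, ?_⟩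
  intro D hD
  have hUV : (U * Vᵀ)ᵀ * (U * Vᵀ) = 1 := by
    have : (U * Vᵀ)ᵀ * (U * Vᵀ) = V * ((Uᵀ * U) * Vᵀ) := by
      simp [Matrix.transpose_mul, Matrix.mul_assoc]
    rw [this, hU, Matrix.one_mul, mul_eq_one_comm.mp hV]
  rw [cost_eq lam C Y D₀ B hBdecomp D hD, cost_eq lam C Y D₀ B hBdecomp (U * Vᵀ) hUV]
  have := hmax D hD
  linarith
end

section
/- Let K ⊆ ℝ^p be nonempty compact convex, Π, 𝒩 : K → ℝ^m continuous with sup_{q∈K} ‖Π(q) − 𝒩(q)‖ ≤ ε, A : ℝ^m → ℝ^d linear with operator norm ‖A‖, and y ∈ ℝ^d. Set F(q) = (1/2)‖A(Π(q)) − y‖² and G(q) = (1/2)‖A(𝒩(q)) − y‖². Then |min_K F − min_K G| ≤ ‖A‖·ε·(M + ‖A‖·ε/2), where M = sup_{q∈K} ‖A(Π(q)) − y‖. -/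
/-- Quantitative error bound for the optimal value of the learning-informed qMRI problem:
if `sup_{q∈K} ‖Π(q) − 𝒩(q)‖ ≤ ε`, then
`|min_K F − min_K G| ≤ ‖A‖·ε·(M + ‖A‖·ε/2)` where `M = sup_{q∈K} ‖A(Π(q)) − y‖`. -/
theorem learning_informed_value_error_bound {p m d : ℕ}
    (K : Set (EuclideanSpace ℝ (Fin p))) (hKne : K.Nonempty) (hKcomp : IsCompact K)
    (hKconv : Convex ℝ K)
    (Pi N : EuclideanSpace ℝ (Fin p) → EuclideanSpace ℝ (Fin m))
    (hPi : ContinuousOn Pi K) (hN : ContinuousOn N K)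
    (ε : ℝ) (hε : 0 ≤ ε) (happrox : ∀ q ∈ K, ‖Pi q - N q‖ ≤ ε)
    (A : EuclideanSpace ℝ (Fin m) →L[ℝ] EuclideanSpace ℝ (Fin d))
    (y : EuclideanSpace ℝ (Fin d))
    (F G : EuclideanSpace ℝ (Fin p) → ℝ)
    (hF : ∀ q, F q = (1/2) * ‖A (Pi q) - y‖^2)
    (hG : ∀ q, G q = (1/2) * ‖A (N q) - y‖^2)
    (M : ℝ) (hM : M = sSup ((fun q => ‖A (Pi q) - y‖) '' K)) :
    |sInf (F '' K) - sInf (G '' K)| ≤ ‖A‖ * ε * (M + ‖A‖ * ε / 2) := by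
  set C := ‖A‖ * ε * (M + ‖A‖ * ε / 2) with hC
  -- continuity of q ↦ ‖A (Pi q) - y‖ on K
  have hcont : ContinuousOn (fun q => ‖A (Pi q) - y‖) K :=
    ((A.continuous.comp_continuousOn hPi).sub continuousOn_const).norm
  have hbdd : BddAbove ((fun q => ‖A (Pi q) - y‖) '' K) :=
    (hKcomp.image_of_continuousOn hcont).bddAbove
  have haM : ∀ q ∈ K, ‖A (Pi q) - y‖ ≤ M := by
    intro q hq
    rw [hM]
    exact le_csSup hbdd ⟨q, hq, rfl⟩
  -- pointwise bound
  have key : ∀ q ∈ K, |F q - G q| ≤ C := by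
    intro q hq
    set a := ‖A (Pi q) - y‖ with ha
    set b := ‖A (N q) - y‖ with hb
    have ha0 : 0 ≤ a := norm_nonneg _
    have hb0 : 0 ≤ b := norm_nonneg _
    have hab : |a - b| ≤ ‖A‖ * ε := by
      have h1 : |a - b| ≤ ‖(A (Pi q) - y) - (A (N q) - y)‖ := abs_norm_sub_norm_le _ _
      have h2 : (A (Pi q) - y) - (A (N q) - y) = A (Pi q - N q) := by
        rw [map_sub]; abel
      calc |a - b| ≤ ‖A (Pi q - N q)‖ := by rw [← h2]; exact h1
        _ ≤ ‖A‖ * ‖Pi q - N q‖ := A.le_opNorm _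
        _ ≤ ‖A‖ * ε := by
            exact mul_le_mul_of_nonneg_left (happrox q hq) (norm_nonneg A)
    have haM' : a ≤ M := haM q hq
    have hbM : b ≤ M + ‖A‖ * ε := by
      have := abs_le.mp hab
      linarith
    have hFG : F q - G q = (1/2) * (a - b) * (a + b) := by
      rw [hF, hG]; ring
    rw [hFG]
    have : |(1/2) * (a - b) * (a + b)| = (1/2) * |a - b| * (a + b) := by
      rw [abs_mul, abs_mul]
      rw [abs_of_nonneg (by linarith : (0:ℝ) ≤ a + b), abs_of_nonneg (by norm_num : (0:ℝ) ≤ (1:ℝ)/2)]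
    rw [this, hC]
    nlinarith [abs_nonneg (a - b), mul_nonneg (norm_nonneg A) hε]
  -- now compare infima
  have hFne : (F '' K).Nonempty := hKne.image F
  have hGne : (G '' K).Nonempty := hKne.image G
  have hFbd : BddBelow (F '' K) := by
    refine ⟨0, ?_⟩
    rintro x ⟨q, hq, rfl⟩
    rw [hF]; positivity
  have hGbd : BddBelow (G '' K) := by
    refine ⟨0, ?_⟩
    rintro x ⟨q, hq, rfl⟩
    rw [hG]; positivity
  have h1 : sInf (F '' K) ≤ sInf (G '' K) + C := by
    rw [← sub_le_iff_le_add]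
    apply le_csInf hGne
    rintro x ⟨q, hq, rfl⟩
    have : F q ≤ G q + C := by have := abs_le.mp (key q hq); linarith
    have hle : sInf (F '' K) ≤ F q := csInf_le hFbd ⟨q, hq, rfl⟩
    linarith
  have h2 : sInf (G '' K) ≤ sInf (F '' K) + C := by
    rw [← sub_le_iff_le_add]
    apply le_csInf hFne
    rintro x ⟨q, hq, rfl⟩
    have : G q ≤ F q + C := by have := abs_le.mp (key q hq); linarith
    have hle : sInf (G '' K) ≤ G q := csInf_le hGbd ⟨q, hq, rfl⟩
    linarith
  rw [abs_le]
  constructor <;> linarith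
end
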